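/- arXiv:1811.01077 — 2 statements merged into one kernel-verified Lean document; each statement's English description precedes it below -/
import Mathlib

section
/- Single-item non-stationary pricing with large inventory. Let T and m be positive integers, b ≥ 6 a real number, δ = √(3·ln(b)/b), prices p_1, …, p_m > 0, mean demands q_{t,j} ∈ [0,1], and let x_{t,j} ≥ 0 be a DLP-N feasible solution with value r* = Σ_{t,j} p_j q_{t,j} x_{t,j}. On a common probability space, let (A_t)_{t≤T} and (Q_{t,j})_{t≤T, j≤m} be jointly independent, where A_t takes values in {0, 1, …, m} with P(A_t = j) = (1−δ)·x_{t,j} for j ∈ {1,…,m} and P(A_t = 0) = 1 − (1−δ)·Σ_j x_{t,j}, and where Q_{t,j} takes values in [0,1] with E[Q_{t,j}] = q_{t,j}. Set the period-t price to P_t = p_{A_t} (with p_0 = 0) and the period-t demand to D_t = Q_{t, A_t} (with Q_{t,0} = 0). Then E[Rev] ≥ (1 − 1/b)·(1 − δ)·r*. -/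
open MeasureTheory ProbabilityTheory

/-- Single-item revenue with inventory truncation: with initial inventory `b`, per-period prices
`P 0, …, P (T-1)` and demands `Q 0, …, Q (T-1)` (periods indexed from `0`), the revenue is
`Σ_t P t · (min b S_{t+1} − min b S_t)` where `S_t = Q 0 + ⋯ + Q (t-1)`. -/
noncomputable def singleItemRev (b : ℝ) (T : ℕ) (P Q : ℕ → ℝ) : ℝ :=
  ∑ t ∈ Finset.range T,
    P t * (min b (∑ s ∈ Finset.range (t + 1), Q s) - min b (∑ s ∈ Finset.range t, Q s))

/-- The combined family consisting of the price-index choices `A t` (values in `ℕ`) and of the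
demands `Q t j` for `j ≤ m` (values in `ℝ`), used to express their joint independence. -/
def npCalFam {Ω : Type*} {T m : ℕ} (A : ℕ → Ω → ℕ) (Q : ℕ → ℕ → Ω → ℝ) :
    (i : Fin T ⊕ (Fin T × Fin (m + 1))) → Ω → Sum.elim (fun _ => ℕ) (fun _ => ℝ) i
  | Sum.inl t => A t
  | Sum.inr tj => Q tj.1 tj.2

/-- The measurable-space structures on the codomains of `npCalFam`. -/
def npCalMS (T m : ℕ) :
    ∀ i : Fin T ⊕ (Fin T × Fin (m + 1)),
      MeasurableSpace (Sum.elim (fun _ => ℕ) (fun _ => ℝ) i)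
  | Sum.inl _ => (inferInstance : MeasurableSpace ℕ)
  | Sum.inr _ => (inferInstance : MeasurableSpace ℝ)

section Aux

lemma aux_log_lb {x : ℝ} (hx : 0 ≤ x) : x - x^2/2 ≤ Real.log (1+x) := by
  set f : ℝ → ℝ := fun z => Real.log (1+z) - (z - z^2/2) with hf
  have hder : ∀ y : ℝ, 0 ≤ y → HasDerivAt f ((1+y)⁻¹ - (1 - y)) y := by
    intro y hy
    have h1 : (0:ℝ) < 1 + y := by linarith
    have hlog : HasDerivAt (fun z : ℝ => Real.log (1+z)) ((1+y)⁻¹) y := by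
      have := (Real.hasDerivAt_log h1.ne').comp y ((hasDerivAt_id y).const_add 1)
      exact this.congr_deriv (by simp)
    have hpoly : HasDerivAt (fun z : ℝ => z - z^2/2) (1 - y) y := by
      have h2 : HasDerivAt (fun z : ℝ => z^2/2) y y := by
        have := (hasDerivAt_pow 2 y).div_const 2
        simpa using this
      exact (hasDerivAt_id y).sub h2
    exact hlog.sub hpoly
  have hmono : MonotoneOn f (Set.Ici (0:ℝ)) := by
    apply monotoneOn_of_deriv_nonneg (convex_Ici 0)
    · exact fun y hy => ((hder y hy).differentiableAt.continuousAt).continuousWithinAt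
    · intro y hy
      simp only [interior_Ici, Set.mem_Ioi] at hy
      exact (hder y hy.le).differentiableAt.differentiableWithinAt
    · intro y hy
      simp only [interior_Ici, Set.mem_Ioi] at hy
      rw [(hder y hy.le).deriv]
      have h1 : (0:ℝ) < 1 + y := by linarith
      have h2 : 1 - y ≤ 1/(1+y) := by
        rw [le_div_iff₀ h1]; nlinarith
      rw [one_div] at h2
      linarith
  have h0 : f 0 ≤ f x := hmono (Set.self_mem_Ici) hx hx
  simp only [hf] at h0
  simp at h0
  linarith

lemma aux_exp_le {c x : ℝ} (h0 : 0 ≤ x) (h1 : x ≤ 1) :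
    Real.exp (c*x) ≤ 1 + x*(Real.exp c - 1) := by
  have h := convexOn_exp.2 (Set.mem_univ (0:ℝ)) (Set.mem_univ c)
    (by linarith : (0:ℝ) ≤ 1 - x) h0 (by ring)
  simp only [smul_eq_mul, mul_zero, zero_add, Real.exp_zero, mul_one] at h
  calc Real.exp (c*x) = Real.exp ((1-x)*0 + x*c) := by ring_nf
    _ ≤ (1-x)*1 + x*Real.exp c := by simpa using h
    _ = 1 + x*(Real.exp c - 1) := by ring

lemma aux_numeric {b δ : ℝ} (hb : 6 ≤ b) (hδ : δ = Real.sqrt (3*Real.log b/b)) :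
    0 ≤ δ ∧ δ < 1 ∧ 1 ≤ Real.log b ∧
      Real.exp (δ*(1-δ)*b - Real.log (1+δ)*(b-1)) ≤ 1/b := by
  have hb0 : (0:ℝ) < b := by linarith
  have hexp1 : Real.exp 1 < 2.7182818286 := Real.exp_one_lt_d9
  have hlb : 1 ≤ Real.log b := by
    rw [Real.le_log_iff_exp_le hb0]; linarith
  have hδ0 : 0 ≤ δ := hδ ▸ Real.sqrt_nonneg _
  have hsq : δ^2 = 3*Real.log b/b := by
    rw [hδ, Real.sq_sqrt]; positivity
  have hδ2b : δ^2*b = 3*Real.log b := by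
    field_simp at hsq ⊢; linarith [hsq]
  have hlog6 : Real.log 6 < 2 := by
    have h6 : (6:ℝ) < Real.exp 2 := by
      rw [show (2:ℝ) = 1+1 by norm_num, Real.exp_add]
      nlinarith [Real.exp_one_gt_d9]
    calc Real.log 6 < Real.log (Real.exp 2) := by
          apply Real.log_lt_log (by norm_num) h6
      _ = 2 := Real.log_exp 2
  have h3lb : 3*Real.log b < b := by
    have h1 : Real.log (b/6) ≤ b/6 - 1 := Real.log_le_sub_one_of_pos (by linarith)
    have h2 : Real.log b = Real.log 6 + Real.log (b/6) := by
      rw [← Real.log_mul (by norm_num) (by positivity)]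
      congr 1; field_simp
    nlinarith
  have hδ1 : δ < 1 := by
    by_contra h
    push_neg at h
    have h1 : (1:ℝ) ≤ δ^2 := by nlinarith [sq_nonneg (δ-1)]
    have h2 : b ≤ δ^2*b := by nlinarith
    linarith
  refine ⟨hδ0, hδ1, hlb, ?_⟩
  have hL : δ - δ^2/2 ≤ Real.log (1+δ) := aux_log_lb hδ0
  have hE : δ*(1-δ)*b - Real.log (1+δ)*(b-1) ≤ -Real.log b := by
    have h1 : (δ - δ^2/2)*(b-1) ≤ Real.log (1+δ)*(b-1) :=
      mul_le_mul_of_nonneg_right hL (by linarith)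
    nlinarith [sq_nonneg (δ-1)]
  calc Real.exp (δ*(1-δ)*b - Real.log (1+δ)*(b-1)) ≤ Real.exp (-Real.log b) :=
        Real.exp_le_exp.2 hE
    _ = 1/b := by rw [Real.exp_neg, Real.exp_log hb0, one_div]

def blkF {T m : ℕ} (t : Fin T) : Finset (Fin T ⊕ (Fin T × Fin (m + 1))) :=
  insert (Sum.inl t) (Finset.univ.image fun j : Fin (m+1) => Sum.inr (t, j))

def blkUF {T m : ℕ} (s : Finset (Fin T)) : Finset (Fin T ⊕ (Fin T × Fin (m + 1))) :=
  s.biUnion (blkF (m := m))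

lemma mem_blkU_inl {T m : ℕ} {s : Finset (Fin T)} {t : Fin T} (ht : t ∈ s) :
    Sum.inl t ∈ blkUF (m := m) s :=
  Finset.mem_biUnion.2 ⟨t, ht, Finset.mem_insert_self _ _⟩

lemma mem_blkU_inr {T m : ℕ} {s : Finset (Fin T)} {t : Fin T} (j : Fin (m+1)) (ht : t ∈ s) :
    Sum.inr (t, j) ∈ blkUF (m := m) s :=
  Finset.mem_biUnion.2 ⟨t, ht,
    Finset.mem_insert_of_mem (Finset.mem_image_of_mem _ (Finset.mem_univ j))⟩

lemma blkU_disjoint {T m : ℕ} {s₁ s₂ : Finset (Fin T)} (h : Disjoint s₁ s₂) :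
    Disjoint (blkUF (m := m) s₁) (blkUF (m := m) s₂) := by
  rw [Finset.disjoint_left]
  intro a h1 h2
  obtain ⟨t₁, ht₁, ha₁⟩ := Finset.mem_biUnion.1 h1
  obtain ⟨t₂, ht₂, ha₂⟩ := Finset.mem_biUnion.1 h2
  have : t₁ = t₂ := by
    simp only [blkF, Finset.mem_insert, Finset.mem_image] at ha₁ ha₂
    rcases ha₁ with h | ⟨j₁, _, h⟩ <;> rcases ha₂ with h' | ⟨j₂, _, h'⟩ <;>
      subst h <;> simp_all
  subst this
  exact Finset.disjoint_left.1 h ht₁ ht₂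

def toN {T m : ℕ} {t : Fin T} (v : Sum.elim (fun _ => ℕ) (fun _ => ℝ)
    (Sum.inl t : Fin T ⊕ (Fin T × Fin (m+1)))) : ℕ := v

def toR {T m : ℕ} {tj : Fin T × Fin (m+1)} (v : Sum.elim (fun _ => ℕ) (fun _ => ℝ)
    (Sum.inr tj : Fin T ⊕ (Fin T × Fin (m+1)))) : ℝ := v

/-- read the demand sum from a tuple indexed by blocks -/
noncomputable def readD {T : ℕ} (m : ℕ) (s : Finset (Fin T))
    (g : (i : blkUF (m := m) s) → Sum.elim (fun _ => ℕ) (fun _ => ℝ)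
      (i : Fin T ⊕ (Fin T × Fin (m+1)))) : ℝ :=
  ∑ t ∈ s.attach, ∑ j : Fin (m+1),
    if toN (g ⟨Sum.inl t.1, mem_blkU_inl t.2⟩) = (j : ℕ)
    then toR (g ⟨Sum.inr (t.1, j), mem_blkU_inr j t.2⟩) else 0

lemma readD_meas {T : ℕ} (m : ℕ) (s : Finset (Fin T)) :
    @Measurable _ _ (@MeasurableSpace.pi _ _ (fun i : blkUF (m := m) s => npCalMS T m i)) _
      (readD m s) := by
  letI : ∀ i : blkUF (m := m) s, MeasurableSpace (Sum.elim (fun _ => ℕ) (fun _ => ℝ)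
    (i : Fin T ⊕ (Fin T × Fin (m+1)))) := fun i => npCalMS T m i
  apply Finset.measurable_sum
  intro t _
  apply Finset.measurable_sum
  intro j _
  have h1 : Measurable fun g : (i : blkUF (m := m) s) → Sum.elim (fun _ => ℕ) (fun _ => ℝ)
      (i : Fin T ⊕ (Fin T × Fin (m+1))) => toN (g ⟨Sum.inl t.1, mem_blkU_inl t.2⟩) :=
    (show @Measurable _ _ (npCalMS T m (Sum.inl t.1)) _ (toN (T := T) (m := m) (t := t.1))
      from measurable_id).comp (measurable_pi_apply _)
  have h2 : Measurable fun g : (i : blkUF (m := m) s) → Sum.elim (fun _ => ℕ) (fun _ => ℝ)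
      (i : Fin T ⊕ (Fin T × Fin (m+1))) => toR (g ⟨Sum.inr (t.1, j), mem_blkU_inr j t.2⟩) :=
    (show @Measurable _ _ (npCalMS T m (Sum.inr (t.1, j))) _
        (toR (T := T) (m := m) (tj := (t.1, j))) from measurable_id).comp
      (measurable_pi_apply _)
  exact Measurable.ite (h1 (MeasurableSet.singleton (j : ℕ))) h2 measurable_const

/-- read the pair `(A t, Q t j)` from a tuple indexed by the block of `t` -/
def readPair {T : ℕ} (m : ℕ) (t : Fin T) (j : Fin (m+1))
    (g : (i : blkUF (m := m) {t}) → Sum.elim (fun _ => ℕ) (fun _ => ℝ)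
      (i : Fin T ⊕ (Fin T × Fin (m+1)))) : ℕ × ℝ :=
  (toN (g ⟨Sum.inl t, mem_blkU_inl (Finset.mem_singleton_self t)⟩),
   toR (g ⟨Sum.inr (t, j), mem_blkU_inr j (Finset.mem_singleton_self t)⟩))

lemma readPair_meas {T : ℕ} (m : ℕ) (t : Fin T) (j : Fin (m+1)) :
    @Measurable _ _ (@MeasurableSpace.pi _ _ (fun i : blkUF (m := m) {t} => npCalMS T m i)) _
      (readPair m t j) := by
  letI : ∀ i : blkUF (m := m) ({t} : Finset (Fin T)),
      MeasurableSpace (Sum.elim (fun _ => ℕ) (fun _ => ℝ)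
        (i : Fin T ⊕ (Fin T × Fin (m+1)))) := fun i => npCalMS T m i
  apply Measurable.prodMk
  · exact (show @Measurable _ _ (npCalMS T m (Sum.inl t)) _ (toN (T := T) (m := m) (t := t))
      from measurable_id).comp (measurable_pi_apply _)
  · exact (show @Measurable _ _ (npCalMS T m (Sum.inr (t, j))) _
      (toR (T := T) (m := m) (tj := (t, j))) from measurable_id).comp (measurable_pi_apply _)

end Aux

/-- single-item non-stationary pricing with large inventory `b ≥ 6` and
`δ = √(3·ln b / b)`.  In each period an index `A t ∈ {0,1,…,m}` is drawn with
`P(A t = j) = (1−δ)·x_{t,j}` for `j ∈ {1,…,m}` and `A t = 0` (offering nothing, price `p_0 = 0`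
and demand `Q_{t,0} = 0`) with the remaining probability; the price is `p (A t)` and the demand
is `Q t (A t)`.  Then the expected revenue is at least `(1 − 1/b)·(1 − δ)·r*`. -/
theorem stmt_17 {Ω : Type*} [MeasurableSpace Ω] (μ : Measure Ω) [IsProbabilityMeasure μ]
    (T m : ℕ) (hT : 0 < T) (hm : 0 < m) (b : ℝ) (hb : 6 ≤ b)
    (δ : ℝ) (hδ : δ = Real.sqrt (3 * Real.log b / b))
    (p : ℕ → ℝ) (hp : ∀ j ∈ Finset.Icc 1 m, 0 < p j) (hp0 : p 0 = 0)
    (q : ℕ → ℕ → ℝ) (hq : ∀ t, t < T → ∀ j ∈ Finset.Icc 1 m, q t j ∈ Set.Icc (0 : ℝ) 1)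
    (x : ℕ → ℕ → ℝ) (hx : ∀ t, t < T → ∀ j ∈ Finset.Icc 1 m, 0 ≤ x t j)
    (hxfeas : ∀ t, t < T → ∑ j ∈ Finset.Icc 1 m, x t j ≤ 1)
    (hxinv : ∑ t ∈ Finset.range T, ∑ j ∈ Finset.Icc 1 m, q t j * x t j ≤ b)
    (r : ℝ) (hr : r = ∑ t ∈ Finset.range T, ∑ j ∈ Finset.Icc 1 m, p j * q t j * x t j)
    (A : ℕ → Ω → ℕ) (Q : ℕ → ℕ → Ω → ℝ)
    (hAmeas : ∀ t, t < T → Measurable (A t))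
    (hQmeas : ∀ t, t < T → ∀ j, j ≤ m → Measurable (Q t j))
    (hindep : iIndepFun (m := npCalMS T m) (npCalFam A Q) μ)
    (hArange : ∀ t, t < T → ∀ ω, A t ω ≤ m)
    (hAdist : ∀ t, t < T → ∀ j ∈ Finset.Icc 1 m,
      μ {ω | A t ω = j} = ENNReal.ofReal ((1 - δ) * x t j))
    (hA0 : ∀ t, t < T →
      μ {ω | A t ω = 0} = ENNReal.ofReal (1 - (1 - δ) * ∑ j ∈ Finset.Icc 1 m, x t j))
    (hQrange : ∀ t, t < T → ∀ j, j ≤ m → ∀ ω, Q t j ω ∈ Set.Icc (0 : ℝ) 1)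
    (hQmean : ∀ t, t < T → ∀ j ∈ Finset.Icc 1 m, ∫ ω, Q t j ω ∂μ = q t j)
    (hQ0 : ∀ t, t < T → ∀ ω, Q t 0 ω = 0) :
    (1 - 1 / b) * (1 - δ) * r
      ≤ ∫ ω, singleItemRev b T (fun t => p (A t ω)) (fun t => Q t (A t ω) ω) ∂μ := by
  classical
  obtain ⟨hδ0, hδ1, hlogb, hchern⟩ := aux_numeric hb hδ
  have hb0 : (0:ℝ) < b := by linarith
  -- the exponent used in the Chernoff bound
  set lam : ℝ := Real.log (1+δ) with hlam
  have hlam0 : 0 ≤ lam := Real.log_nonneg (by linarith)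
  have hexplam : Real.exp lam - 1 = δ := by
    rw [hlam, Real.exp_log (by linarith)]; ring
  -- prices are nonnegative
  have hpnn : ∀ k, k ≤ m → 0 ≤ p k := by
    intro k hk
    rcases Nat.eq_zero_or_pos k with h | h
    · simp [h, hp0]
    · exact (hp k (Finset.mem_Icc.2 ⟨h, hk⟩)).le
  set pb : ℝ := ∑ j ∈ Finset.Icc 1 m, p j with hpb
  have hpA : ∀ s, s < T → ∀ ω : Ω, 0 ≤ p (A s ω) ∧ p (A s ω) ≤ pb := by
    intro s hs ω
    have hAr := hArange s hs ω
    refine ⟨hpnn _ hAr, ?_⟩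
    rcases Nat.eq_zero_or_pos (A s ω) with h | h
    · rw [h, hp0, hpb]
      exact Finset.sum_nonneg fun j hj => (hp j hj).le
    · exact Finset.single_le_sum (fun j hj => (hp j hj).le)
        (Finset.mem_Icc.2 ⟨h, hAr⟩)
  -- the demand random variables, summed form
  set DF : ℕ → Ω → ℝ := fun s ω => ∑ j : Fin (m+1),
    if A s ω = (j : ℕ) then Q s (j : ℕ) ω else 0 with hDF
  have hDFeq : ∀ s, s < T → ∀ ω, DF s ω = Q s (A s ω) ω := by
    intro s hs ω
    simp only [hDF]
    rw [show (∑ j : Fin (m+1), if A s ω = (j : ℕ) then Q s (j : ℕ) ω else 0)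
        = ∑ j ∈ Finset.range (m+1), if A s ω = j then Q s j ω else 0 from
      Fin.sum_univ_eq_sum_range (fun j => if A s ω = j then Q s j ω else 0) (m+1)]
    rw [Finset.sum_ite_eq]
    exact if_pos (Finset.mem_range.2 (Nat.lt_succ_of_le (hArange s hs ω)))
  have hDF0 : ∀ s, s < T → ∀ ω, 0 ≤ DF s ω := by
    intro s hs ω
    rw [hDFeq s hs ω]
    exact (hQrange s hs _ (hArange s hs ω) ω).1
  have hDF1 : ∀ s, s < T → ∀ ω, DF s ω ≤ 1 := by
    intro s hs ω
    rw [hDFeq s hs ω]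
    exact (hQrange s hs _ (hArange s hs ω) ω).2
  have hDFmeas : ∀ s, s < T → Measurable (DF s) := by
    intro s hs
    simp only [hDF]
    apply Finset.measurable_sum
    intro j _
    exact Measurable.ite ((hAmeas s hs) (measurableSet_singleton ((j : ℕ))))
      (hQmeas s hs (j : ℕ) (Nat.lt_succ_iff.1 j.isLt)) measurable_const
  -- integrability helper
  have hInt : ∀ (f : Ω → ℝ) (C : ℝ), Measurable f → (∀ ω, |f ω| ≤ C) → Integrable f μ := by
    intro f C hf hbd
    exact Integrable.mono' (integrable_const C) hf.aestronglyMeasurable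
      (Filter.Eventually.of_forall fun ω => by simpa using hbd ω)
  -- the leave-one-out demand sums
  set Y : Fin T → Ω → ℝ := fun t ω => ∑ u ∈ Finset.univ.erase t, DF (u : ℕ) ω with hY
  have hYmeas : ∀ t, Measurable (Y t) :=
    fun t => Finset.measurable_sum _ fun u _ => hDFmeas _ u.isLt
  -- evaluation of readD on the actual tuples
  have hreadD : ∀ (s : Finset (Fin T)) (ω : Ω),
      readD m s (fun i => npCalFam A Q (i : Fin T ⊕ (Fin T × Fin (m+1))) ω)
        = ∑ u ∈ s, DF (u : ℕ) ω := by
    intro s ω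
    rw [← Finset.sum_attach s (fun u => DF (u : ℕ) ω)]
    simp only [readD]
    apply Finset.sum_congr rfl
    intro u _
    simp only [hDF]
    rfl
  -- family measurability
  have hfam_meas : ∀ i, @Measurable _ _ _ (npCalMS T m i) (npCalFam A Q i) := by
    intro i
    cases i with
    | inl t => exact hAmeas (t : ℕ) t.isLt
    | inr tj => exact hQmeas (tj.1 : ℕ) tj.1.isLt (tj.2 : ℕ) (Nat.lt_succ_iff.1 tj.2.isLt)
  -- mean of DF
  set ν : Fin T → ℝ := fun t => (1-δ) * ∑ j ∈ Finset.Icc 1 m, q (t : ℕ) j * x (t : ℕ) j with hν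
  have hrange : Finset.range (m+1) = insert 0 (Finset.Icc 1 m) := by
    ext k; simp [Nat.lt_succ_iff]; omega
  have hqx0 : ∀ s, s < T → ∀ j ∈ Finset.Icc 1 m, 0 ≤ q s j * x s j := by
    intro s hs j hj
    exact mul_nonneg (hq s hs j hj).1 (hx s hs j hj)
  have hν0 : ∀ t : Fin T, 0 ≤ ν t := by
    intro t
    exact mul_nonneg (by linarith) (Finset.sum_nonneg (hqx0 _ t.isLt))
  have hνsum : ∑ t : Fin T, ν t ≤ (1-δ)*b := by
    have h1 : ∑ t : Fin T, ν t
        = ∑ t ∈ Finset.range T, (1-δ) * ∑ j ∈ Finset.Icc 1 m, q t j * x t j := by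
      rw [← Fin.sum_univ_eq_sum_range (fun s => (1-δ) * ∑ j ∈ Finset.Icc 1 m, q s j * x s j) T]
    rw [h1, ← Finset.mul_sum]
    exact mul_le_mul_of_nonneg_left hxinv (by linarith)
  -- the per-(t,j) integrals
  have hGmeas : ∀ s, s < T → ∀ j, j ≤ m →
      Measurable (fun ω => (if A s ω = j then (1:ℝ) else 0) * Q s j ω) := by
    intro s hs j hj
    exact Measurable.mul
      (Measurable.ite ((hAmeas s hs) (measurableSet_singleton j)) measurable_const
        measurable_const)
      (hQmeas s hs j hj)
  have hGval : ∀ (t : Fin T), ∀ j ∈ Finset.Icc 1 m,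
      ∫ ω, (if A (t : ℕ) ω = j then (1:ℝ) else 0) * Q (t : ℕ) j ω ∂μ
        = (1-δ) * x (t : ℕ) j * q (t : ℕ) j := by
    intro t j hj
    obtain ⟨hj1, hjm⟩ := Finset.mem_Icc.1 hj
    have hjlt : j < m + 1 := Nat.lt_succ_of_le hjm
    have hAQ : IndepFun (A (t : ℕ)) (Q (t : ℕ) j) μ := by
      have h := hindep.indepFun
        (i := Sum.inl t) (j := Sum.inr (t, ⟨j, hjlt⟩)) (by simp)
      exact h
    have hind : IndepFun (fun ω => if A (t : ℕ) ω = j then (1:ℝ) else 0) (Q (t : ℕ) j) μ := by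
      have h := hAQ.comp (φ := fun a => if a = j then (1:ℝ) else 0) (ψ := id)
        measurable_from_top measurable_id
      exact h
    have hint1 : Integrable (fun ω => if A (t : ℕ) ω = j then (1:ℝ) else 0) μ := by
      apply hInt _ 1
      · exact Measurable.ite ((hAmeas (t : ℕ) t.isLt) (measurableSet_singleton j))
          measurable_const measurable_const
      · intro ω; split <;> simp
    have hint2 : Integrable (Q (t : ℕ) j) μ := by
      apply hInt _ 1 (hQmeas (t : ℕ) t.isLt j hjm)
      intro ω
      have := hQrange (t : ℕ) t.isLt j hjm ω
      rw [abs_le]; exact ⟨by linarith [this.1], this.2⟩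
    have hmulkey : ∫ ω, (if A (t : ℕ) ω = j then (1:ℝ) else 0) * Q (t : ℕ) j ω ∂μ
        = (∫ ω, (if A (t : ℕ) ω = j then (1:ℝ) else 0) ∂μ) * ∫ ω, Q (t : ℕ) j ω ∂μ :=
      hind.integral_fun_mul_eq_mul_integral hint1.aestronglyMeasurable hint2.aestronglyMeasurable
    rw [hmulkey]
    have hindic : (fun ω => if A (t : ℕ) ω = j then (1:ℝ) else 0)
        = Set.indicator {ω | A (t : ℕ) ω = j} (fun _ => (1:ℝ)) := by
      funext ω
      by_cases h : A (t : ℕ) ω = j <;>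
        simp [Set.indicator_apply, Set.mem_setOf_eq, h]
    rw [hindic, integral_indicator_const _ (show MeasurableSet {ω | A (t : ℕ) ω = j} from
        (hAmeas (t : ℕ) t.isLt) (measurableSet_singleton j)),
      measureReal_def, hAdist (t : ℕ) t.isLt j hj, hQmean (t : ℕ) t.isLt j hj,
      ENNReal.toReal_ofReal (mul_nonneg (by linarith) (hx (t : ℕ) t.isLt j hj))]
    simp [mul_assoc]
  have hGint : ∀ s, s < T → ∀ j, j ≤ m →
      Integrable (fun ω => (if A s ω = j then (1:ℝ) else 0) * Q s j ω) μ := by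
    intro s hs j hj
    apply hInt _ 1 (hGmeas s hs j hj)
    intro ω
    have hQ := hQrange s hs j hj ω
    rw [abs_le]
    constructor
    · split <;> simp <;> linarith [hQ.1]
    · split <;> simp <;> linarith [hQ.2]
  have hDFsplit : ∀ s, s < T → ∀ ω, DF s ω
      = ∑ j ∈ Finset.range (m+1), (if A s ω = j then (1:ℝ) else 0) * Q s j ω := by
    intro s hs ω
    simp only [hDF]
    rw [show (∑ j : Fin (m+1), if A s ω = (j : ℕ) then Q s (j : ℕ) ω else 0)
        = ∑ j ∈ Finset.range (m+1), if A s ω = j then Q s j ω else 0 from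
      Fin.sum_univ_eq_sum_range (fun j => if A s ω = j then Q s j ω else 0) (m+1)]
    apply Finset.sum_congr rfl
    intro j _
    split <;> simp
  have hEDF : ∀ t : Fin T, ∫ ω, DF (t : ℕ) ω ∂μ = ν t := by
    intro t
    have h1 : (fun ω => DF (t : ℕ) ω) = fun ω =>
        ∑ j ∈ Finset.range (m+1), (if A (t : ℕ) ω = j then (1:ℝ) else 0) * Q (t : ℕ) j ω := by
      funext ω; exact hDFsplit (t : ℕ) t.isLt ω
    rw [h1, integral_finset_sum _ (fun j hj =>
      hGint (t : ℕ) t.isLt j (Nat.lt_succ_iff.1 (Finset.mem_range.1 hj)))]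
    rw [hrange, Finset.sum_insert (by simp)]
    have h0 : ∫ ω, (if A (t : ℕ) ω = 0 then (1:ℝ) else 0) * Q (t : ℕ) 0 ω ∂μ = 0 := by
      have : (fun ω => (if A (t : ℕ) ω = 0 then (1:ℝ) else 0) * Q (t : ℕ) 0 ω)
          = fun _ => (0:ℝ) := by
        funext ω; rw [hQ0 (t : ℕ) t.isLt ω]; ring
      rw [this, integral_zero]
    rw [h0, zero_add]
    simp only [hν]
    rw [Finset.mul_sum]
    apply Finset.sum_congr rfl
    intro j hj
    rw [hGval t j hj]
    ring
  -- independence of DF t from sums of other DF's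
  have hIndepD : ∀ (t : Fin T) (s : Finset (Fin T)), t ∉ s →
      IndepFun (DF (t : ℕ)) (fun ω => ∑ u ∈ s, DF (u : ℕ) ω) μ := by
    intro t s hts
    have hdisj : Disjoint ({t} : Finset (Fin T)) s := Finset.disjoint_singleton_left.2 hts
    have h := hindep.indepFun_finset (blkUF {t}) (blkUF s) (blkU_disjoint hdisj) hfam_meas
    have h2 := h.comp (readD_meas m {t}) (readD_meas m s)
    apply h2.congr
    · apply Filter.Eventually.of_forall
      intro ω
      show readD m {t} (fun i => npCalFam A Q (i : Fin T ⊕ (Fin T × Fin (m+1))) ω) = DF (t : ℕ) ω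
      rw [hreadD, Finset.sum_singleton]
    · apply Filter.Eventually.of_forall
      intro ω
      exact hreadD s ω
  -- mgf product formula
  have hmgf : ∀ s : Finset (Fin T),
      ∫ ω, Real.exp (lam * ∑ u ∈ s, DF (u : ℕ) ω) ∂μ
        = ∏ u ∈ s, ∫ ω, Real.exp (lam * DF (u : ℕ) ω) ∂μ := by
    intro s
    have hexpint : ∀ (s' : Finset (Fin T)),
        Integrable (fun ω => Real.exp (lam * ∑ u ∈ s', DF (u : ℕ) ω)) μ := by
      intro s'
      apply hInt _ (Real.exp (lam * (s'.card : ℝ)))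
      · exact Real.measurable_exp.comp
          ((Finset.measurable_sum _ fun u _ => hDFmeas _ u.isLt).const_mul lam)
      · intro ω
        rw [abs_of_pos (Real.exp_pos _), Real.exp_le_exp]
        apply mul_le_mul_of_nonneg_left _ hlam0
        calc ∑ u ∈ s', DF (u : ℕ) ω ≤ ∑ u ∈ s', 1 :=
              Finset.sum_le_sum fun u _ => hDF1 _ u.isLt ω
          _ = (s'.card : ℝ) := by simp
    induction s using Finset.induction_on with
    | empty => simp
    | @insert a s' ha ih =>
      simp only [Finset.sum_insert ha, Finset.prod_insert ha]
      rw [← ih]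
      have hI : IndepFun (DF (a : ℕ)) (fun ω => ∑ u ∈ s', DF (u : ℕ) ω) μ := hIndepD a s' ha
      have hIc := hI.comp (φ := fun z => Real.exp (lam*z)) (ψ := fun z => Real.exp (lam*z))
        (Real.measurable_exp.comp (measurable_id.const_mul lam))
        (Real.measurable_exp.comp (measurable_id.const_mul lam))
      have hint1 : Integrable (fun ω => Real.exp (lam * DF (a : ℕ) ω)) μ := by
        have := hexpint {a}
        simpa using this
      have key : ∫ ω, Real.exp (lam * DF (a : ℕ) ω) * Real.exp (lam * ∑ u ∈ s', DF (u : ℕ) ω) ∂μ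
          = (∫ ω, Real.exp (lam * DF (a : ℕ) ω) ∂μ)
            * ∫ ω, Real.exp (lam * ∑ u ∈ s', DF (u : ℕ) ω) ∂μ :=
        hIc.integral_fun_mul_eq_mul_integral hint1.aestronglyMeasurable (hexpint s').aestronglyMeasurable
      rw [← key]
      congr 1
      funext ω
      rw [← Real.exp_add]
      ring_nf
  -- each mgf factor bound
  have hfac : ∀ t : Fin T, ∫ ω, Real.exp (lam * DF (t : ℕ) ω) ∂μ ≤ Real.exp (δ * ν t) := by
    intro t
    have hptw : ∀ ω, Real.exp (lam * DF (t : ℕ) ω) ≤ 1 + DF (t : ℕ) ω * δ := by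
      intro ω
      have := aux_exp_le (c := lam) (hDF0 (t : ℕ) t.isLt ω) (hDF1 (t : ℕ) t.isLt ω)
      rwa [hexplam] at this
    have hint1 : Integrable (fun ω => Real.exp (lam * DF (t : ℕ) ω)) μ := by
      apply hInt _ (Real.exp lam)
      · exact Real.measurable_exp.comp ((hDFmeas _ t.isLt).const_mul lam)
      · intro ω
        rw [abs_of_pos (Real.exp_pos _), Real.exp_le_exp]
        calc lam * DF (t : ℕ) ω ≤ lam * 1 :=
              mul_le_mul_of_nonneg_left (hDF1 _ t.isLt ω) hlam0
          _ = lam := mul_one lam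
    have hint2 : Integrable (fun ω => 1 + DF (t : ℕ) ω * δ) μ := by
      apply hInt _ (1 + δ)
      · exact (measurable_const.add ((hDFmeas _ t.isLt).mul_const δ))
      · intro ω
        rw [abs_le]
        constructor
        · nlinarith [hDF0 (t : ℕ) t.isLt ω, hDF1 (t : ℕ) t.isLt ω]
        · nlinarith [hDF0 (t : ℕ) t.isLt ω, hDF1 (t : ℕ) t.isLt ω]
    calc ∫ ω, Real.exp (lam * DF (t : ℕ) ω) ∂μ
        ≤ ∫ ω, (1 + DF (t : ℕ) ω * δ) ∂μ := integral_mono hint1 hint2 hptw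
      _ = 1 + δ * ν t := by
          have hDFint : Integrable (fun ω => DF (t : ℕ) ω) μ := by
            apply hInt _ 1 (hDFmeas _ t.isLt)
            intro ω
            rw [abs_le]
            exact ⟨by linarith [hDF0 (t : ℕ) t.isLt ω], hDF1 (t : ℕ) t.isLt ω⟩
          rw [integral_add (integrable_const 1) (hDFint.mul_const δ)]
          rw [integral_mul_const, hEDF t]
          simp [measure_univ]
          ring
      _ ≤ Real.exp (δ * ν t) := by
          have := Real.add_one_le_exp (δ * ν t)
          linarith
  -- Chernoff bound
  have hcher : ∀ t : Fin T, (μ {ω | b - 1 ≤ Y t ω}).toReal ≤ 1/b := by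
    intro t
    have hintexp : Integrable (fun ω => Real.exp (lam * Y t ω)) μ := by
      apply hInt _ (Real.exp (lam * (T : ℝ)))
      · exact Real.measurable_exp.comp ((hYmeas t).const_mul lam)
      · intro ω
        rw [abs_of_pos (Real.exp_pos _), Real.exp_le_exp]
        apply mul_le_mul_of_nonneg_left _ hlam0
        simp only [hY]
        calc ∑ u ∈ Finset.univ.erase t, DF (u : ℕ) ω
            ≤ ∑ u ∈ (Finset.univ.erase t : Finset (Fin T)), 1 :=
              Finset.sum_le_sum fun u _ => hDF1 _ u.isLt ω
          _ = ((Finset.univ.erase t).card : ℝ) := by simp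
          _ ≤ (T : ℝ) := by
              have := Finset.card_erase_le (s := (Finset.univ : Finset (Fin T))) (a := t)
              have h2 : (Finset.univ : Finset (Fin T)).card = T := by simp
              exact_mod_cast le_trans this (le_of_eq h2)
    have h := measure_ge_le_exp_mul_mgf (μ := μ) (X := Y t) (b - 1) hlam0 hintexp
    have hmgfY : mgf (Y t) μ lam = ∫ ω, Real.exp (lam * Y t ω) ∂μ := rfl
    have hmgfbound : mgf (Y t) μ lam ≤ Real.exp (δ * ((1-δ)*b)) := by
      rw [hmgfY]
      simp only [hY]
      rw [hmgf (Finset.univ.erase t)]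
      calc ∏ u ∈ Finset.univ.erase t, ∫ ω, Real.exp (lam * DF (u : ℕ) ω) ∂μ
          ≤ ∏ u ∈ Finset.univ.erase t, Real.exp (δ * ν u) := by
            apply Finset.prod_le_prod
            · intro u _
              exact integral_nonneg fun ω => (Real.exp_pos _).le
            · intro u _
              exact hfac u
        _ = Real.exp (∑ u ∈ Finset.univ.erase t, δ * ν u) := (Real.exp_sum _ _).symm
        _ ≤ Real.exp (δ * ((1-δ)*b)) := by
            rw [Real.exp_le_exp, ← Finset.mul_sum]
            apply mul_le_mul_of_nonneg_left _ hδ0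
            calc ∑ u ∈ Finset.univ.erase t, ν u ≤ ∑ u : Fin T, ν u := by
                  apply Finset.sum_le_sum_of_subset_of_nonneg (Finset.erase_subset _ _)
                  intro u _ _
                  exact hν0 u
              _ ≤ (1-δ)*b := hνsum
    calc (μ {ω | b - 1 ≤ Y t ω}).toReal
        ≤ Real.exp (-lam * (b-1)) * mgf (Y t) μ lam := h
      _ ≤ Real.exp (-lam * (b-1)) * Real.exp (δ * ((1-δ)*b)) := by
          apply mul_le_mul_of_nonneg_left hmgfbound (Real.exp_pos _).le
      _ = Real.exp (δ*(1-δ)*b - lam*(b-1)) := by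
          rw [← Real.exp_add]; ring_nf
      _ ≤ 1/b := hchern
  -- lower bound on the probability of the good event
  have hρ : ∀ t : Fin T, 1 - 1/b ≤ ∫ ω, (if Y t ω ≤ b-1 then (1:ℝ) else 0) ∂μ := by
    intro t
    have hs : MeasurableSet {ω | Y t ω ≤ b-1} := measurableSet_le (hYmeas t) measurable_const
    have h1 : (fun ω => if Y t ω ≤ b-1 then (1:ℝ) else 0)
        = Set.indicator {ω | Y t ω ≤ b-1} (fun _ => (1:ℝ)) := by
      funext ω
      by_cases h : Y t ω ≤ b-1 <;> simp [Set.indicator_apply, Set.mem_setOf_eq, h]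
    rw [h1, integral_indicator_const _ hs]
    simp only [smul_eq_mul, mul_one]
    have hcompl : μ {ω | Y t ω ≤ b-1} + μ {ω | Y t ω ≤ b-1}ᶜ = 1 := by
      rw [measure_add_measure_compl hs, measure_univ]
    have hsub : μ {ω | Y t ω ≤ b-1}ᶜ ≤ μ {ω | b - 1 ≤ Y t ω} := by
      apply measure_mono
      intro ω hω
      simp only [Set.mem_compl_iff, Set.mem_setOf_eq, not_le] at hω
      exact le_of_lt hω
    have hne1 : μ {ω | Y t ω ≤ b-1} ≠ ⊤ := measure_ne_top μ _
    have hne2 : μ {ω | Y t ω ≤ b-1}ᶜ ≠ ⊤ := measure_ne_top μ _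
    have htr : (μ {ω | Y t ω ≤ b-1}).toReal + (μ {ω | Y t ω ≤ b-1}ᶜ).toReal = 1 := by
      rw [← ENNReal.toReal_add hne1 hne2, hcompl, ENNReal.toReal_one]
    have h2 : (μ {ω | Y t ω ≤ b-1}ᶜ).toReal ≤ (μ {ω | b - 1 ≤ Y t ω}).toReal :=
      ENNReal.toReal_mono (measure_ne_top μ _) hsub
    have h3 := hcher t
    rw [measureReal_def]
    linarith
  -- independence for the main term
  have hIndep1 : ∀ (t : Fin T) (j : Fin (m+1)),
      IndepFun (fun ω => (if A (t : ℕ) ω = (j : ℕ) then (1:ℝ) else 0) * Q (t : ℕ) (j : ℕ) ω)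
        (fun ω => if Y t ω ≤ b-1 then (1:ℝ) else 0) μ := by
    intro t j
    have hdisj : Disjoint ({t} : Finset (Fin T)) (Finset.univ.erase t) := by
      simp
    have h := hindep.indepFun_finset (blkUF {t}) (blkUF (Finset.univ.erase t))
      (blkU_disjoint hdisj) hfam_meas
    have hφ : Measurable (fun v : ℕ × ℝ => (if v.1 = (j : ℕ) then (1:ℝ) else 0) * v.2) := by
      apply Measurable.mul
      · exact (measurable_from_top (f := fun a : ℕ => if a = (j : ℕ) then (1:ℝ) else 0)).comp
          measurable_fst
      · exact measurable_snd
    have hψ : Measurable (fun z : ℝ => if z ≤ b-1 then (1:ℝ) else 0) :=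
      Measurable.ite measurableSet_Iic measurable_const measurable_const
    have h2 := (h.comp (readPair_meas m t j) (readD_meas m (Finset.univ.erase t))).comp hφ hψ
    apply h2.congr
    · apply Filter.Eventually.of_forall
      intro ω
      rfl
    · apply Filter.Eventually.of_forall
      intro ω
      show (if readD m (Finset.univ.erase t)
          (fun i => npCalFam A Q (i : Fin T ⊕ (Fin T × Fin (m+1))) ω) ≤ b-1 then (1:ℝ) else 0)
        = if Y t ω ≤ b-1 then (1:ℝ) else 0
      rw [hreadD]
  -- value of ∫ g t
  have hgval : ∀ t : Fin T,
      ∫ ω, (if Y t ω ≤ b-1 then (1:ℝ) else 0) * (p (A (t : ℕ) ω) * DF (t : ℕ) ω) ∂μ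
        = (∫ ω, (if Y t ω ≤ b-1 then (1:ℝ) else 0) ∂μ)
          * ∑ j ∈ Finset.Icc 1 m, p j * ((1-δ) * x (t : ℕ) j * q (t : ℕ) j) := by
    intro t
    have hDsplitP : ∀ ω, p (A (t : ℕ) ω) * DF (t : ℕ) ω
        = ∑ j ∈ Finset.range (m+1), p j * ((if A (t : ℕ) ω = j then (1:ℝ) else 0) * Q (t : ℕ) j ω) := by
      intro ω
      rw [hDFeq (t : ℕ) t.isLt]
      have h2 : ∀ j ∈ Finset.range (m+1),
          p j * ((if A (t : ℕ) ω = j then (1:ℝ) else 0) * Q (t : ℕ) j ω)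
            = if A (t : ℕ) ω = j then p j * Q (t : ℕ) j ω else 0 := by
        intro j _; split <;> simp
      rw [Finset.sum_congr rfl h2, Finset.sum_ite_eq,
        if_pos (Finset.mem_range.2 (Nat.lt_succ_of_le (hArange (t : ℕ) t.isLt ω)))]
    have heq : (fun ω => (if Y t ω ≤ b-1 then (1:ℝ) else 0) * (p (A (t : ℕ) ω) * DF (t : ℕ) ω))
        = fun ω => ∑ j ∈ Finset.range (m+1),
          p j * ((if Y t ω ≤ b-1 then (1:ℝ) else 0)
            * ((if A (t : ℕ) ω = j then (1:ℝ) else 0) * Q (t : ℕ) j ω)) := by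
      funext ω
      rw [hDsplitP ω, Finset.mul_sum]
      apply Finset.sum_congr rfl
      intro j _
      ring
    have hindmeas : Measurable (fun ω => if Y t ω ≤ b-1 then (1:ℝ) else 0) :=
      Measurable.ite (measurableSet_le (hYmeas t) measurable_const) measurable_const
        measurable_const
    have hindint : Integrable (fun ω => if Y t ω ≤ b-1 then (1:ℝ) else 0) μ := by
      apply hInt _ 1 hindmeas
      intro ω; split <;> simp
    have hauxint : ∀ j, j ≤ m → Integrable (fun ω => (if Y t ω ≤ b-1 then (1:ℝ) else 0)
        * ((if A (t : ℕ) ω = j then (1:ℝ) else 0) * Q (t : ℕ) j ω)) μ := by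
      intro j hj
      apply hInt _ 1 (hindmeas.mul (hGmeas (t : ℕ) t.isLt j hj))
      intro ω
      have hQ := hQrange (t : ℕ) t.isLt j hj ω
      simp only [Pi.mul_apply]
      rw [abs_mul, abs_mul]
      have e1 : |if Y t ω ≤ b-1 then (1:ℝ) else 0| ≤ 1 := by split <;> simp
      have e2 : |if A (t : ℕ) ω = j then (1:ℝ) else 0| ≤ 1 := by split <;> simp
      have e3 : |Q (t : ℕ) j ω| ≤ 1 := by rw [abs_le]; exact ⟨by linarith [hQ.1], hQ.2⟩
      calc |if Y t ω ≤ b-1 then (1:ℝ) else 0| * (|if A (t : ℕ) ω = j then (1:ℝ) else 0| * |Q (t : ℕ) j ω|)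
          ≤ 1 * (1 * 1) := by
            apply mul_le_mul e1 _ (by positivity) (by norm_num)
            apply mul_le_mul e2 e3 (abs_nonneg _) (by norm_num)
        _ = 1 := by norm_num
    rw [heq, integral_finset_sum _ (fun j hj => ((hauxint j
      (Nat.lt_succ_iff.1 (Finset.mem_range.1 hj))).const_mul (p j)))]
    have hterm : ∀ j ∈ Finset.Icc 1 m,
        ∫ ω, p j * ((if Y t ω ≤ b-1 then (1:ℝ) else 0)
          * ((if A (t : ℕ) ω = j then (1:ℝ) else 0) * Q (t : ℕ) j ω)) ∂μ
        = p j * (((1-δ) * x (t : ℕ) j * q (t : ℕ) j)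
            * ∫ ω, (if Y t ω ≤ b-1 then (1:ℝ) else 0) ∂μ) := by
      intro j hj
      obtain ⟨hj1, hjm⟩ := Finset.mem_Icc.1 hj
      rw [integral_const_mul]
      congr 1
      have hflip : (fun ω => (if Y t ω ≤ b-1 then (1:ℝ) else 0)
          * ((if A (t : ℕ) ω = j then (1:ℝ) else 0) * Q (t : ℕ) j ω))
          = fun ω => ((if A (t : ℕ) ω = j then (1:ℝ) else 0) * Q (t : ℕ) j ω)
            * (if Y t ω ≤ b-1 then (1:ℝ) else 0) := by
        funext ω; ring
      rw [hflip]
      have hjfin : ((⟨j, Nat.lt_succ_of_le hjm⟩ : Fin (m+1)) : ℕ) = j := rfl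
      have hI := hIndep1 t ⟨j, Nat.lt_succ_of_le hjm⟩
      rw [hjfin] at hI
      have key := hI.integral_fun_mul_eq_mul_integral (hGint (t : ℕ) t.isLt j hjm).aestronglyMeasurable hindint.aestronglyMeasurable
      have key2 : ∫ ω, ((if A (t : ℕ) ω = j then (1:ℝ) else 0) * Q (t : ℕ) j ω)
          * (if Y t ω ≤ b-1 then (1:ℝ) else 0) ∂μ
          = (∫ ω, (if A (t : ℕ) ω = j then (1:ℝ) else 0) * Q (t : ℕ) j ω ∂μ)
            * ∫ ω, (if Y t ω ≤ b-1 then (1:ℝ) else 0) ∂μ := key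
      rw [key2, hGval t j hj]
    rw [Finset.sum_congr rfl (fun j hj => by
      rcases Finset.mem_range.1 hj with _
      rfl)]
    rw [hrange, Finset.sum_insert (by simp)]
    have h00 : ∫ ω, p 0 * ((if Y t ω ≤ b-1 then (1:ℝ) else 0)
        * ((if A (t : ℕ) ω = 0 then (1:ℝ) else 0) * Q (t : ℕ) 0 ω)) ∂μ = 0 := by
      simp [hp0]
    rw [h00, zero_add, Finset.sum_congr rfl hterm, Finset.mul_sum]
    apply Finset.sum_congr rfl
    intro j hj
    ring
  -- pathwise inequality
  have hpath : ∀ ω : Ω,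
      ∑ t : Fin T, (if Y t ω ≤ b-1 then (1:ℝ) else 0) * (p (A (t : ℕ) ω) * DF (t : ℕ) ω)
        ≤ singleItemRev b T (fun t => p (A t ω)) (fun t => Q t (A t ω) ω) := by
    intro ω
    have hrev : singleItemRev b T (fun t => p (A t ω)) (fun t => Q t (A t ω) ω)
        = ∑ t ∈ Finset.range T, p (A t ω) * (min b (∑ s ∈ Finset.range (t+1), DF s ω)
            - min b (∑ s ∈ Finset.range t, DF s ω)) := by
      simp only [singleItemRev]
      apply Finset.sum_congr rfl
      intro t ht
      have ht' := Finset.mem_range.1 ht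
      have h1 : ∑ s ∈ Finset.range (t+1), Q s (A s ω) ω = ∑ s ∈ Finset.range (t+1), DF s ω :=
        Finset.sum_congr rfl fun s hs =>
          (hDFeq s (by have := Finset.mem_range.1 hs; omega) ω).symm
      have h2 : ∑ s ∈ Finset.range t, Q s (A s ω) ω = ∑ s ∈ Finset.range t, DF s ω :=
        Finset.sum_congr rfl fun s hs =>
          (hDFeq s (by have := Finset.mem_range.1 hs; omega) ω).symm
      rw [h1, h2]
    rw [hrev,
      ← Fin.sum_univ_eq_sum_range (fun t => p (A t ω) * (min b (∑ s ∈ Finset.range (t+1), DF s ω)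
        - min b (∑ s ∈ Finset.range t, DF s ω))) T]
    apply Finset.sum_le_sum
    intro t _
    have hmono : ∑ s ∈ Finset.range (t : ℕ), DF s ω ≤ ∑ s ∈ Finset.range ((t : ℕ)+1), DF s ω := by
      rw [Finset.sum_range_succ]
      linarith [hDF0 (t : ℕ) t.isLt ω]
    have hpnn' : 0 ≤ p (A (t : ℕ) ω) := (hpA (t : ℕ) t.isLt ω).1
    by_cases hcase : Y t ω ≤ b - 1
    · rw [if_pos hcase, one_mul]
      have hST : ∑ s ∈ Finset.range T, DF s ω = DF (t : ℕ) ω + Y t ω := by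
        rw [← Fin.sum_univ_eq_sum_range (fun s => DF s ω) T]
        simp only [hY]
        exact (Finset.add_sum_erase _ _ (Finset.mem_univ t)).symm
      have hS2T : ∑ s ∈ Finset.range ((t : ℕ)+1), DF s ω ≤ ∑ s ∈ Finset.range T, DF s ω := by
        apply Finset.sum_le_sum_of_subset_of_nonneg
        · exact Finset.range_subset_range.2 (by omega)
        · intro s hs _
          exact hDF0 s (Finset.mem_range.1 hs) ω
      have hS2b : ∑ s ∈ Finset.range ((t : ℕ)+1), DF s ω ≤ b := by
        have hd1 := hDF1 (t : ℕ) t.isLt ω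
        linarith
      have hS1b : ∑ s ∈ Finset.range (t : ℕ), DF s ω ≤ b := le_trans hmono hS2b
      rw [min_eq_right hS2b, min_eq_right hS1b]
      have hdiff : ∑ s ∈ Finset.range ((t : ℕ)+1), DF s ω - ∑ s ∈ Finset.range (t : ℕ), DF s ω
          = DF (t : ℕ) ω := by
        rw [Finset.sum_range_succ]; ring
      rw [hdiff]
    · rw [if_neg hcase, zero_mul]
      apply mul_nonneg hpnn'
      have := min_le_min (le_refl b) hmono
      linarith
  -- integrability of both sides
  have hgmeas : ∀ t : Fin T,
      Measurable (fun ω => (if Y t ω ≤ b-1 then (1:ℝ) else 0) * (p (A (t : ℕ) ω) * DF (t : ℕ) ω)) := by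
    intro t
    exact (Measurable.ite (measurableSet_le (hYmeas t) measurable_const) measurable_const
      measurable_const).mul (((measurable_from_top (f := p)).comp (hAmeas (t : ℕ) t.isLt)).mul
        (hDFmeas (t : ℕ) t.isLt))
  have hgint : ∀ t : Fin T,
      Integrable (fun ω => (if Y t ω ≤ b-1 then (1:ℝ) else 0) * (p (A (t : ℕ) ω) * DF (t : ℕ) ω)) μ := by
    intro t
    have hpbnn : 0 ≤ pb := Finset.sum_nonneg fun j hj => (hp j hj).le
    apply hInt _ pb (hgmeas t)
    intro ω
    obtain ⟨h1, h2⟩ := hpA (t : ℕ) t.isLt ω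
    have h3 := hDF0 (t : ℕ) t.isLt ω
    have h4 := hDF1 (t : ℕ) t.isLt ω
    by_cases h : Y t ω ≤ b-1
    · rw [if_pos h, one_mul, abs_of_nonneg (mul_nonneg h1 h3)]
      calc p (A (t : ℕ) ω) * DF (t : ℕ) ω ≤ pb * 1 := mul_le_mul h2 h4 h3 hpbnn
        _ = pb := mul_one pb
    · rw [if_neg h, zero_mul, abs_zero]
      exact hpbnn
  have hRevInt : Integrable
      (fun ω => singleItemRev b T (fun t => p (A t ω)) (fun t => Q t (A t ω) ω)) μ := by
    have hpbnn : 0 ≤ pb := Finset.sum_nonneg fun j hj => (hp j hj).le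
    have hminlem : ∀ u v : ℝ, u ≤ v → v ≤ u + 1 → 0 ≤ min b v - min b u ∧ min b v - min b u ≤ 1 := by
      intro u v h h2
      rw [min_def, min_def]
      split_ifs <;> constructor <;> linarith
    have hReveq : (fun ω => singleItemRev b T (fun t => p (A t ω)) (fun t => Q t (A t ω) ω))
        = fun ω => ∑ t ∈ Finset.range T, p (A t ω) * (min b (∑ s ∈ Finset.range (t+1), DF s ω)
            - min b (∑ s ∈ Finset.range t, DF s ω)) := by
      funext ω
      simp only [singleItemRev]
      apply Finset.sum_congr rfl
      intro t ht
      have ht' := Finset.mem_range.1 ht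
      have h1 : ∑ s ∈ Finset.range (t+1), Q s (A s ω) ω = ∑ s ∈ Finset.range (t+1), DF s ω :=
        Finset.sum_congr rfl fun s hs =>
          (hDFeq s (by have := Finset.mem_range.1 hs; omega) ω).symm
      have h2 : ∑ s ∈ Finset.range t, Q s (A s ω) ω = ∑ s ∈ Finset.range t, DF s ω :=
        Finset.sum_congr rfl fun s hs =>
          (hDFeq s (by have := Finset.mem_range.1 hs; omega) ω).symm
      rw [h1, h2]
    rw [hReveq]
    apply hInt _ ((T : ℝ) * pb)
    · apply Finset.measurable_sum
      intro t ht
      have ht' := Finset.mem_range.1 ht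
      apply Measurable.mul
      · exact (measurable_from_top (f := p)).comp (hAmeas t ht')
      · apply Measurable.sub
        · exact measurable_const.min (Finset.measurable_sum _ fun s hs =>
            hDFmeas s (by have := Finset.mem_range.1 hs; omega))
        · exact measurable_const.min (Finset.measurable_sum _ fun s hs =>
            hDFmeas s (by have := Finset.mem_range.1 hs; omega))
    · intro ω
      calc |∑ t ∈ Finset.range T, p (A t ω) * (min b (∑ s ∈ Finset.range (t+1), DF s ω)
            - min b (∑ s ∈ Finset.range t, DF s ω))|
          ≤ ∑ t ∈ Finset.range T, |p (A t ω) * (min b (∑ s ∈ Finset.range (t+1), DF s ω)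
            - min b (∑ s ∈ Finset.range t, DF s ω))| := Finset.abs_sum_le_sum_abs _ _
        _ ≤ ∑ _t ∈ Finset.range T, pb := by
            apply Finset.sum_le_sum
            intro t ht
            have ht' := Finset.mem_range.1 ht
            have hmono : ∑ s ∈ Finset.range t, DF s ω ≤ ∑ s ∈ Finset.range (t+1), DF s ω := by
              rw [Finset.sum_range_succ]
              linarith [hDF0 t ht' ω]
            have hup : ∑ s ∈ Finset.range (t+1), DF s ω ≤ (∑ s ∈ Finset.range t, DF s ω) + 1 := by
              rw [Finset.sum_range_succ]
              linarith [hDF1 t ht' ω]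
            obtain ⟨hm0, hm1⟩ := hminlem _ _ hmono hup
            obtain ⟨h1, h2⟩ := hpA t ht' ω
            rw [abs_of_nonneg (mul_nonneg h1 hm0)]
            calc p (A t ω) * (min b (∑ s ∈ Finset.range (t+1), DF s ω)
                - min b (∑ s ∈ Finset.range t, DF s ω)) ≤ pb * 1 := mul_le_mul h2 hm1 hm0 hpbnn
              _ = pb := mul_one pb
        _ = (T : ℝ) * pb := by
            rw [Finset.sum_const, Finset.card_range, nsmul_eq_mul]
  -- final assembly
  have hK : ∀ t : Fin T, 0 ≤ ∑ j ∈ Finset.Icc 1 m, p j * ((1-δ) * x (t : ℕ) j * q (t : ℕ) j) := by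
    intro t
    apply Finset.sum_nonneg
    intro j hj
    apply mul_nonneg (hp j hj).le
    apply mul_nonneg (mul_nonneg (by linarith) (hx (t : ℕ) t.isLt j hj))
    exact (hq (t : ℕ) t.isLt j hj).1
  have hsumint : Integrable (fun ω => ∑ t : Fin T,
      (if Y t ω ≤ b-1 then (1:ℝ) else 0) * (p (A (t : ℕ) ω) * DF (t : ℕ) ω)) μ :=
    integrable_finset_sum _ fun t _ => hgint t
  have hstep1 := integral_mono hsumint hRevInt hpath
  rw [integral_finset_sum _ (fun t _ => hgint t)] at hstep1
  have hstep2 : (1 - 1/b) * (1 - δ) * r ≤ ∑ t : Fin T,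
      ∫ ω, (if Y t ω ≤ b-1 then (1:ℝ) else 0) * (p (A (t : ℕ) ω) * DF (t : ℕ) ω) ∂μ := by
    have hterm : ∀ t : Fin T,
        (1 - 1/b) * ∑ j ∈ Finset.Icc 1 m, p j * ((1-δ) * x (t : ℕ) j * q (t : ℕ) j)
          ≤ ∫ ω, (if Y t ω ≤ b-1 then (1:ℝ) else 0) * (p (A (t : ℕ) ω) * DF (t : ℕ) ω) ∂μ := by
      intro t
      rw [hgval t]
      exact mul_le_mul_of_nonneg_right (hρ t) (hK t)
    calc (1 - 1/b) * (1 - δ) * r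
        = ∑ t : Fin T, (1 - 1/b) * ∑ j ∈ Finset.Icc 1 m,
            p j * ((1-δ) * x (t : ℕ) j * q (t : ℕ) j) := by
          rw [hr]
          rw [← Fin.sum_univ_eq_sum_range
            (fun s => ∑ j ∈ Finset.Icc 1 m, p j * q s j * x s j) T]
          rw [Finset.mul_sum]
          apply Finset.sum_congr rfl
          intro t _
          rw [Finset.mul_sum, Finset.mul_sum]
          apply Finset.sum_congr rfl
          intro j _
          ring
      _ ≤ ∑ t : Fin T, ∫ ω, (if Y t ω ≤ b-1 then (1:ℝ) else 0)
            * (p (A (t : ℕ) ω) * DF (t : ℕ) ω) ∂μ :=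
          Finset.sum_le_sum fun t _ => hterm t
  linarith
end

section
/- Let b ≥ 6 be a real number and set δ = √(3·ln(b)/b). Let Q_1, …, Q_T be independent random variables taking values in [0,1] with Σ_{t=1}^T E[Q_t] ≤ (1 − δ)·b. Then P(Σ_{t=1}^T Q_t ≥ b) ≤ 1/b. -/
open MeasureTheory ProbabilityTheory Real

lemma my_log_one_sub_le {x : ℝ} (h0 : 0 ≤ x) (h1 : x < 1) :
    Real.log (1 - x) ≤ -x - x^2/3 := by
  set u : ℝ := Real.sqrt (Real.sqrt (1 - x)) with hu
  have hx1 : (0:ℝ) < 1 - x := by linarith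
  have hu0 : 0 < u := Real.sqrt_pos.mpr (Real.sqrt_pos.mpr hx1)
  have hu2 : u^2 = Real.sqrt (1-x) := Real.sq_sqrt (Real.sqrt_nonneg _)
  have hu4 : u^4 = 1 - x := by
    have : (u^2)^2 = 1 - x := by rw [hu2]; exact Real.sq_sqrt hx1.le
    nlinarith [this]
  have hu1 : u ≤ 1 := by
    have : u^4 ≤ 1 := by rw [hu4]; linarith
    exact (pow_le_one_iff_of_nonneg hu0.le (by norm_num)).mp this
  have hlog : Real.log (1 - x) = 4 * Real.log u := by
    rw [hu, Real.log_sqrt (Real.sqrt_nonneg _), Real.log_sqrt hx1.le]; ring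
  have hle : Real.log u ≤ u - 1 := Real.log_le_sub_one_of_pos hu0
  have hq : u^6 + 2*u^5 + 3*u^4 + 4*u^3 - 4*u - 8 ≤ 0 := by
    nlinarith [pow_le_pow_of_le_one hu0.le hu1 (show 3 ≤ 6 by norm_num),
      pow_le_pow_of_le_one hu0.le hu1 (show 3 ≤ 5 by norm_num),
      pow_le_pow_of_le_one hu0.le hu1 (show 3 ≤ 4 by norm_num),
      pow_le_pow_of_le_one hu0.le hu1 (show 1 ≤ 3 by norm_num)]
  have key : 4*(u-1) ≤ -x - x^2/3 := by
    have hx : x = 1 - u^4 := by linarith [hu4]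
    rw [hx]
    nlinarith [sq_nonneg (u-1), mul_nonpos_of_nonneg_of_nonpos (sq_nonneg (u-1)) hq]
  linarith [hlog ▸ (by linarith : 4 * Real.log u ≤ 4*(u-1))]

/-- let `b ≥ 6` and `δ = √(3·ln b / b)`.  If `Q 0, …, Q (T-1)` are independent
random variables with values in `[0,1]` and `Σ_t E[Q t] ≤ (1 − δ)·b`, then
`P(Σ_t Q t ≥ b) ≤ 1/b`. -/
theorem stmt_18 {Ω : Type*} [MeasurableSpace Ω] (μ : Measure Ω) [IsProbabilityMeasure μ]
    (b : ℝ) (hb : 6 ≤ b) (δ : ℝ) (hδ : δ = Real.sqrt (3 * Real.log b / b))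
    (T : ℕ) (Q : ℕ → Ω → ℝ)
    (hQmeas : ∀ t, t < T → Measurable (Q t))
    (hQindep : iIndepFun (fun i : Fin T => Q i) μ)
    (hQrange : ∀ t, t < T → ∀ ω, Q t ω ∈ Set.Icc (0 : ℝ) 1)
    (hmean : ∑ t ∈ Finset.range T, ∫ ω, Q t ω ∂μ ≤ (1 - δ) * b) :
    μ {ω | b ≤ ∑ t ∈ Finset.range T, Q t ω} ≤ ENNReal.ofReal (1 / b) := by
  have hb0 : (0:ℝ) < b := by linarith
  have hb1 : (1:ℝ) < b := by linarith
  have hlogb : 0 < Real.log b := Real.log_pos hb1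
  have hδ0 : 0 ≤ δ := hδ ▸ Real.sqrt_nonneg _
  have hδsq : δ^2 = 3 * Real.log b / b := by
    rw [hδ]; exact Real.sq_sqrt (by positivity)
  -- δ < 1
  have hlog6 : Real.log 6 < 2 := by
    have h1 := Real.exp_one_gt_d9
    have h2 : Real.exp 2 = Real.exp 1 * Real.exp 1 := by
      rw [← Real.exp_add]; norm_num
    have h6 : (6:ℝ) < Real.exp 2 := by nlinarith [Real.exp_pos 1]
    calc Real.log 6 < Real.log (Real.exp 2) := Real.log_lt_log (by norm_num) h6
      _ = 2 := Real.log_exp 2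
  have h3log : 3 * Real.log b < b := by
    have hdiv : Real.log (b/6) ≤ b/6 - 1 := Real.log_le_sub_one_of_pos (by linarith)
    have : Real.log b = Real.log 6 + Real.log (b/6) := by
      rw [Real.log_div (by linarith) (by norm_num)]; ring
    linarith
  have hδ1 : δ < 1 := by
    have h2 : δ^2 < 1 := by
      rw [hδsq, div_lt_one hb0]; linarith
    nlinarith
  have h1δ : (0:ℝ) < 1 - δ := by linarith
  -- the exponent parameter
  set t0 : ℝ := -Real.log (1 - δ) with ht0def
  have ht0 : 0 ≤ t0 := by
    have := Real.log_nonpos h1δ.le (by linarith)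
    simp [ht0def]; linarith
  have hexpt0 : Real.exp t0 = (1 - δ)⁻¹ := by
    rw [ht0def, Real.exp_neg, Real.exp_log h1δ]
  set c : ℝ := Real.exp t0 - 1 with hcdef
  have hc0 : 0 ≤ c := by
    have := Real.one_le_exp ht0; simp [hcdef]; linarith
  set X : Fin T → Ω → ℝ := fun i => Q i with hXdef
  have hXm : ∀ i, Measurable (X i) := fun i => hQmeas i i.isLt
  set S : Ω → ℝ := fun ω => ∑ i : Fin T, X i ω with hSdef
  have hSm : Measurable S := Finset.measurable_sum _ fun i _ => hXm i
  have hSrange : ∀ ω, 0 ≤ S ω ∧ S ω ≤ T := by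
    intro ω
    constructor
    · exact Finset.sum_nonneg fun i _ => (hQrange i i.isLt ω).1
    · calc S ω ≤ ∑ _i : Fin T, (1:ℝ) :=
            Finset.sum_le_sum fun i _ => (hQrange i i.isLt ω).2
        _ = T := by simp
  -- integrability of exp(t0 * S)
  have hSint : Integrable (fun ω => Real.exp (t0 * S ω)) μ := by
    refine ⟨((hSm.const_mul t0).exp).aestronglyMeasurable, ?_⟩
    refine HasFiniteIntegral.of_bounded (C := Real.exp (t0 * T)) (ae_of_all _ fun ω => ?_)
    rw [Real.norm_eq_abs, abs_of_pos (Real.exp_pos _)]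
    exact Real.exp_le_exp.mpr (mul_le_mul_of_nonneg_left (hSrange ω).2 ht0)
  -- per-variable integrability and mgf bound
  have hXint : ∀ i : Fin T, Integrable (X i) μ := by
    intro i
    refine ⟨(hXm i).aestronglyMeasurable, ?_⟩
    refine HasFiniteIntegral.of_bounded (C := 1) (ae_of_all _ fun ω => ?_)
    rw [Real.norm_eq_abs, abs_of_nonneg (hQrange i i.isLt ω).1]
    exact (hQrange i i.isLt ω).2
  have hmgf : ∀ i : Fin T, mgf (X i) μ t0 ≤ Real.exp (c * ∫ ω, X i ω ∂μ) := by
    intro i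
    have hpt : ∀ ω, Real.exp (t0 * X i ω) ≤ 1 + c * X i ω := by
      intro ω
      obtain ⟨hx0, hx1⟩ := hQrange i i.isLt ω
      have hcv := convexOn_exp.2 (Set.mem_univ (0:ℝ)) (Set.mem_univ t0)
        (by linarith : (0:ℝ) ≤ 1 - X i ω) hx0 (by ring)
      simp only [smul_eq_mul, mul_zero, zero_add, Real.exp_zero, mul_one] at hcv
      calc Real.exp (t0 * X i ω) = Real.exp (X i ω * t0) := by rw [mul_comm]
        _ ≤ (1 - X i ω) + X i ω * Real.exp t0 := hcv
        _ = 1 + c * X i ω := by rw [hcdef]; ring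
    have hexint : Integrable (fun ω => Real.exp (t0 * X i ω)) μ := by
      refine ⟨((hXm i).const_mul t0).exp.aestronglyMeasurable, ?_⟩
      refine HasFiniteIntegral.of_bounded (C := Real.exp t0) (ae_of_all _ fun ω => ?_)
      rw [Real.norm_eq_abs, abs_of_pos (Real.exp_pos _)]
      refine Real.exp_le_exp.mpr ?_
      nlinarith [(hQrange i i.isLt ω).1, (hQrange i i.isLt ω).2, ht0]
    have hint2 : Integrable (fun ω => 1 + c * X i ω) μ :=
      (integrable_const 1).add ((hXint i).const_mul c)
    calc mgf (X i) μ t0 = ∫ ω, Real.exp (t0 * X i ω) ∂μ := rfl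
      _ ≤ ∫ ω, (1 + c * X i ω) ∂μ := integral_mono hexint hint2 hpt
      _ = 1 + c * ∫ ω, X i ω ∂μ := by
          rw [integral_add (integrable_const 1) ((hXint i).const_mul c),
            integral_const_mul, integral_const]
          simp
      _ ≤ Real.exp (c * ∫ ω, X i ω ∂μ) := by
          have := Real.add_one_le_exp (c * ∫ ω, X i ω ∂μ); linarith
  -- Chernoff
  have hch := measure_ge_le_exp_mul_mgf (μ := μ) (X := S) b ht0 hSint
  have hsum : mgf S μ t0 ≤ Real.exp (c * ((1-δ) * b)) := by
    have hSfun : S = ∑ i : Fin T, X i := by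
      funext ω; rw [hSdef]; simp [Finset.sum_apply]
    have heq : mgf S μ t0 = ∏ i : Fin T, mgf (X i) μ t0 := by
      rw [hSfun]; exact hQindep.mgf_sum hXm Finset.univ
    have hEsum : ∑ i : Fin T, ∫ ω, X i ω ∂μ = ∑ t ∈ Finset.range T, ∫ ω, Q t ω ∂μ :=
      Fin.sum_univ_eq_sum_range (fun t => ∫ ω, Q t ω ∂μ) T
    calc mgf S μ t0 = ∏ i : Fin T, mgf (X i) μ t0 := heq
      _ ≤ ∏ i : Fin T, Real.exp (c * ∫ ω, X i ω ∂μ) :=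
          Finset.prod_le_prod (fun i _ => mgf_nonneg) (fun i _ => hmgf i)
      _ = Real.exp (∑ i : Fin T, c * ∫ ω, X i ω ∂μ) := (Real.exp_sum _ _).symm
      _ = Real.exp (c * ∑ i : Fin T, ∫ ω, X i ω ∂μ) := by rw [Finset.mul_sum]
      _ ≤ Real.exp (c * ((1-δ) * b)) := by
          refine Real.exp_le_exp.mpr ?_
          rw [hEsum]
          exact mul_le_mul_of_nonneg_left hmean hc0
  -- final numeric computation
  have hfinal : Real.exp (-t0 * b) * mgf S μ t0 ≤ 1 / b := by
    have h1 : Real.exp (-t0 * b) * mgf S μ t0 ≤ Real.exp (-t0 * b + c * ((1-δ)*b)) := by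
      rw [Real.exp_add]
      exact mul_le_mul_of_nonneg_left hsum (Real.exp_pos _).le
    have hc1δ : c * (1 - δ) = δ := by
      rw [hcdef, hexpt0]; field_simp; ring
    have hexpo : -t0 * b + c * ((1-δ)*b) = b * (Real.log (1-δ) + δ) := by
      have : c * ((1-δ)*b) = (c * (1-δ)) * b := by ring
      rw [this, hc1δ, ht0def]; ring
    have hlogle : Real.log (1-δ) + δ ≤ -(δ^2/3) := by
      have := my_log_one_sub_le hδ0 hδ1; linarith
    have hble : b * (Real.log (1-δ) + δ) ≤ -Real.log b := by
      have h1 : b * (Real.log (1-δ) + δ) ≤ b * (-(δ^2/3)) :=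
        mul_le_mul_of_nonneg_left hlogle hb0.le
      have h2 : b * (-(δ^2/3)) = -Real.log b := by
        rw [hδsq]; field_simp
      linarith
    calc Real.exp (-t0 * b) * mgf S μ t0 ≤ Real.exp (-t0 * b + c * ((1-δ)*b)) := h1
      _ ≤ Real.exp (-Real.log b) := by
          rw [hexpo]; exact Real.exp_le_exp.mpr hble
      _ = 1 / b := by rw [Real.exp_neg, Real.exp_log hb0, one_div]
  have hseteq : {ω | b ≤ ∑ t ∈ Finset.range T, Q t ω} = {ω | b ≤ S ω} := by
    ext ω
    simp only [Set.mem_setOf_eq, hSdef]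
    rw [Fin.sum_univ_eq_sum_range (fun t => Q t ω) T]
  rw [hseteq, ENNReal.le_ofReal_iff_toReal_le (measure_ne_top μ _) (by positivity)]
  exact hch.trans hfinal
end
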